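/- The mass of the mKdV breather is M[B_{α,β}] = (1/2)∫_ℝ B_{α,β}(t,x)² dx = 4β, for all α, β > 0 and all t ∈ ℝ. -/

import Mathlib

open MeasureTheory

noncomputable def breather (α β x₁ x₂ : ℝ) (t x : ℝ) : ℝ :=
  2 * Real.sqrt 2 *
    deriv (fun y : ℝ =>
      Real.arctan ((β / α) * Real.sin (α * (y + (α ^ 2 - 3 * β ^ 2) * t + x₁)) /
        Real.cosh (β * (y + (3 * α ^ 2 - β ^ 2) * t + x₂)))) x

namespace BreatherMassAux

open Real Filter Set

/-- denominator -/
noncomputable def DD (α β a b x : ℝ) : ℝ :=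
  α ^ 2 * Real.cosh (β * (x + b)) ^ 2 + β ^ 2 * Real.sin (α * (x + a)) ^ 2

/-- antiderivative of the squared derivative -/
noncomputable def GG (α β a b x : ℝ) : ℝ :=
  (α ^ 2 * β * Real.cosh (β * (x + b)) * Real.sinh (β * (x + b))
    + α * β ^ 2 * Real.sin (α * (x + a)) * Real.cos (α * (x + a))) / (2 * DD α β a b x)

/-- square root of the integrand -/
noncomputable def rr (α β a b x : ℝ) : ℝ :=
  α * β * (α * Real.cos (α * (x + a)) * Real.cosh (β * (x + b))
    - β * Real.sin (α * (x + a)) * Real.sinh (β * (x + b))) / DD α β a b x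

/-- the integrand -/
noncomputable def gg (α β a b x : ℝ) : ℝ := (rr α β a b x) ^ 2

lemma DD_pos {α : ℝ} (β a b : ℝ) (hα : α ≠ 0) (x : ℝ) : 0 < DD α β a b x := by
  have h1 : 0 < α ^ 2 := by positivity
  have h2 : 0 < Real.cosh (β * (x + b)) ^ 2 := by positivity
  have h3 : (0:ℝ) ≤ β ^ 2 * Real.sin (α * (x + a)) ^ 2 := by positivity
  unfold DD; nlinarith

lemma poly (α β s C c S : ℝ) (hs : s ^ 2 + C ^ 2 = 1) (hc : c ^ 2 - S ^ 2 = 1) :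
    (S ^ 2 + c ^ 2 + C ^ 2 - s ^ 2) * (α ^ 2 * c ^ 2 + β ^ 2 * s ^ 2)
      - 2 * (α * c * S + β * s * C) ^ 2 = 2 * (α * C * c - β * s * S) ^ 2 := by
  linear_combination (α ^ 2 * c ^ 2 + β ^ 2 * s ^ 2) * hc - (α ^ 2 * c ^ 2 + β ^ 2 * s ^ 2) * hs

lemma hasDerivAt_lin (c d : ℝ) (x : ℝ) : HasDerivAt (fun y : ℝ => c * (y + d)) c x := by
  simpa using ((hasDerivAt_id x).add_const d).const_mul c

lemma hasDerivAt_sin' (c d x : ℝ) :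
    HasDerivAt (fun y : ℝ => Real.sin (c * (y + d))) (Real.cos (c * (x + d)) * c) x :=
  (Real.hasDerivAt_sin _).comp x (hasDerivAt_lin c d x)

lemma hasDerivAt_cos' (c d x : ℝ) :
    HasDerivAt (fun y : ℝ => Real.cos (c * (y + d))) (-Real.sin (c * (x + d)) * c) x :=
  (Real.hasDerivAt_cos _).comp x (hasDerivAt_lin c d x)

lemma hasDerivAt_sinh' (c d x : ℝ) :
    HasDerivAt (fun y : ℝ => Real.sinh (c * (y + d))) (Real.cosh (c * (x + d)) * c) x :=
  (Real.hasDerivAt_sinh _).comp x (hasDerivAt_lin c d x)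

lemma hasDerivAt_cosh' (c d x : ℝ) :
    HasDerivAt (fun y : ℝ => Real.cosh (c * (y + d))) (Real.sinh (c * (x + d)) * c) x :=
  (Real.hasDerivAt_cosh _).comp x (hasDerivAt_lin c d x)

lemma tendsto_tanh_atTop :
    Tendsto (fun u : ℝ => Real.sinh u / Real.cosh u) atTop (nhds 1) := by
  have heq : ∀ u : ℝ, Real.sinh u / Real.cosh u
      = (1 - Real.exp (-2 * u)) / (1 + Real.exp (-2 * u)) := by
    intro u
    have h2 : Real.exp (-2 * u) = (Real.exp u)⁻¹ * (Real.exp u)⁻¹ := by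
      rw [← Real.exp_neg, ← Real.exp_add]; ring_nf
    have he := Real.exp_ne_zero u
    have hd : (0:ℝ) < 1 + Real.exp (-2 * u) := by positivity
    have hd2 : (0:ℝ) < 1 + (Real.exp u)⁻¹ * (Real.exp u)⁻¹ := by positivity
    have h3 : Real.exp u + (Real.exp u)⁻¹ ≠ 0 := by positivity
    rw [Real.sinh_eq, Real.cosh_eq, h2, Real.exp_neg]
    field_simp
  have h0 : Tendsto (fun u : ℝ => Real.exp (-2 * u)) atTop (nhds 0) := by
    apply Real.tendsto_exp_atBot.comp
    have h1 : Tendsto (fun u : ℝ => 2 * u) atTop atTop :=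
      Tendsto.const_mul_atTop two_pos tendsto_id
    exact (tendsto_neg_atTop_atBot.comp h1).congr fun u => by
      simp only [Function.comp_apply]; ring
  have hnum : Tendsto (fun u : ℝ => 1 - Real.exp (-2 * u)) atTop (nhds (1 - 0)) :=
    tendsto_const_nhds.sub h0
  have hden : Tendsto (fun u : ℝ => 1 + Real.exp (-2 * u)) atTop (nhds (1 + 0)) :=
    tendsto_const_nhds.add h0
  have := hnum.div hden (by norm_num)
  simp only [sub_zero, add_zero, div_one] at this
  exact Tendsto.congr (fun u => (heq u).symm) this

lemma tendsto_tanh_atBot :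
    Tendsto (fun u : ℝ => Real.sinh u / Real.cosh u) atBot (nhds (-1)) := by
  have h := (tendsto_tanh_atTop.comp tendsto_neg_atBot_atTop).neg
  rw [show -(1:ℝ) = -1 from rfl] at h
  refine Tendsto.congr (fun u => ?_) h
  simp [Function.comp, Real.sinh_neg, Real.cosh_neg, neg_div]

lemma tendsto_cosh_atTop : Tendsto Real.cosh atTop atTop := by
  apply tendsto_atTop_mono (fun u => ?_)
    (Real.tendsto_exp_atTop.atTop_div_const two_pos)
  rw [Real.cosh_eq]
  have := Real.exp_pos (-u)
  linarith

lemma tendsto_cosh_atBot : Tendsto Real.cosh atBot atTop := by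
  have h := tendsto_cosh_atTop.comp tendsto_neg_atBot_atTop
  exact h.congr fun u => by simp [Real.cosh_neg]

section basic

variable {α β : ℝ} (a b : ℝ) (hα : 0 < α) (hβ : 0 < β)

include hα in
lemma hasDerivAt_GG (x : ℝ) : HasDerivAt (GG α β a b) (gg α β a b x) x := by
  have hD := DD_pos β a b hα.ne' x
  have hNq : HasDerivAt (fun y : ℝ =>
      α ^ 2 * β * Real.cosh (β * (y + b)) * Real.sinh (β * (y + b))
        + α * β ^ 2 * Real.sin (α * (y + a)) * Real.cos (α * (y + a)))
      ((α ^ 2 * β * (Real.sinh (β * (x + b)) * β)) * Real.sinh (β * (x + b))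
        + α ^ 2 * β * Real.cosh (β * (x + b)) * (Real.cosh (β * (x + b)) * β)
        + ((α * β ^ 2 * (Real.cos (α * (x + a)) * α)) * Real.cos (α * (x + a))
        + α * β ^ 2 * Real.sin (α * (x + a)) * (-Real.sin (α * (x + a)) * α))) x :=
    (((hasDerivAt_cosh' β b x).const_mul (α ^ 2 * β)).mul (hasDerivAt_sinh' β b x)).add
      (((hasDerivAt_sin' α a x).const_mul (α * β ^ 2)).mul (hasDerivAt_cos' α a x))
  have hDen : HasDerivAt (fun y : ℝ => 2 * DD α β a b y)
      (2 * (α ^ 2 * (2 * Real.cosh (β * (x + b)) ^ 1 * (Real.sinh (β * (x + b)) * β))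
        + β ^ 2 * (2 * Real.sin (α * (x + a)) ^ 1 * (Real.cos (α * (x + a)) * α)))) x := by
    apply HasDerivAt.const_mul
    exact (((hasDerivAt_cosh' β b x).pow 2).const_mul (α ^ 2)).add
      (((hasDerivAt_sin' α a x).pow 2).const_mul (β ^ 2))
  have h2D : (2 * DD α β a b x) ≠ 0 := by positivity
  have := hNq.div hDen h2D
  refine this.congr_deriv ?_
  symm
  unfold gg rr DD
  rw [div_pow, div_eq_div_iff (by positivity) (by positivity)]
  have hs := Real.sin_sq_add_cos_sq (α * (x + a))
  have hc := Real.cosh_sq_sub_sinh_sq (β * (x + b))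
  linear_combination (-2 * α ^ 2 * β ^ 2 *
      (α ^ 2 * Real.cosh (β * (x + b)) ^ 2 + β ^ 2 * Real.sin (α * (x + a)) ^ 2) ^ 2) *
    poly α β (Real.sin (α * (x + a))) (Real.cos (α * (x + a)))
      (Real.cosh (β * (x + b))) (Real.sinh (β * (x + b))) hs hc

include hα hβ in
lemma hasDerivAt_inner (x : ℝ) :
    HasDerivAt (fun y : ℝ =>
      Real.arctan ((β / α) * Real.sin (α * (y + a)) / Real.cosh (β * (y + b))))
      (rr α β a b x) x := by
  have hco : Real.cosh (β * (x + b)) ≠ 0 := (Real.cosh_pos _).ne'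
  have hD := DD_pos β a b hα.ne' x
  have hq : HasDerivAt (fun y : ℝ => (β / α) * Real.sin (α * (y + a)) / Real.cosh (β * (y + b)))
      (((β / α) * (Real.cos (α * (x + a)) * α) * Real.cosh (β * (x + b))
        - (β / α) * Real.sin (α * (x + a)) * (Real.sinh (β * (x + b)) * β))
        / Real.cosh (β * (x + b)) ^ 2) x :=
    ((hasDerivAt_sin' α a x).const_mul (β / α)).div (hasDerivAt_cosh' β b x) hco
  have := (Real.hasDerivAt_arctan
      ((β / α) * Real.sin (α * (x + a)) / Real.cosh (β * (x + b)))).comp x hq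
  refine this.congr_deriv ?_
  symm
  have h1 : (0:ℝ) < 1 + ((β / α) * Real.sin (α * (x + a)) / Real.cosh (β * (x + b))) ^ 2 := by
    positivity
  unfold rr DD
  field_simp

include hα hβ in
lemma tendsto_GG_atTop : Tendsto (GG α β a b) atTop (nhds (β / 2)) := by
  have hu : Tendsto (fun x : ℝ => β * (x + b)) atTop atTop :=
    Tendsto.const_mul_atTop hβ (tendsto_atTop_add_const_right _ b tendsto_id)
  have h1 : Tendsto (fun x : ℝ => Real.sinh (β * (x + b)) / Real.cosh (β * (x + b)))
      atTop (nhds 1) := tendsto_tanh_atTop.comp hu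
  have hinv : Tendsto (fun x : ℝ => (Real.cosh (β * (x + b)))⁻¹) atTop (nhds 0) :=
    (tendsto_cosh_atTop.comp hu).inv_tendsto_atTop
  have h2 : Tendsto (fun x : ℝ =>
      Real.sin (α * (x + a)) * Real.cos (α * (x + a)) / Real.cosh (β * (x + b)) ^ 2)
      atTop (nhds 0) := by
    apply squeeze_zero_norm _ hinv
    intro x
    have hc1 : 1 ≤ Real.cosh (β * (x + b)) := Real.one_le_cosh _
    have h4 : |Real.sin (α * (x + a)) * Real.cos (α * (x + a))| ≤ 1 := by
      rw [abs_mul]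
      exact mul_le_one₀ (Real.abs_sin_le_one _) (abs_nonneg _) (Real.abs_cos_le_one _)
    rw [Real.norm_eq_abs, abs_div, abs_of_pos (by positivity :
      (0:ℝ) < Real.cosh (β * (x + b)) ^ 2), div_le_iff₀ (by positivity)]
    have hco := (Real.cosh_pos (β * (x + b))).ne'
    have h5 : (Real.cosh (β * (x + b)))⁻¹ * Real.cosh (β * (x + b)) ^ 2
        = Real.cosh (β * (x + b)) := by
      rw [sq, ← mul_assoc, inv_mul_cancel₀ hco, one_mul]
    rw [h5]
    linarith
  have h3 : Tendsto (fun x : ℝ =>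
      Real.sin (α * (x + a)) ^ 2 / Real.cosh (β * (x + b)) ^ 2) atTop (nhds 0) := by
    apply squeeze_zero_norm _ hinv
    intro x
    have hc1 : 1 ≤ Real.cosh (β * (x + b)) := Real.one_le_cosh _
    have h4 : |Real.sin (α * (x + a)) ^ 2| ≤ 1 := by
      rw [abs_pow]
      exact pow_le_one₀ (abs_nonneg _) (Real.abs_sin_le_one _)
    rw [Real.norm_eq_abs, abs_div, abs_of_pos (by positivity :
      (0:ℝ) < Real.cosh (β * (x + b)) ^ 2), div_le_iff₀ (by positivity)]
    have hco := (Real.cosh_pos (β * (x + b))).ne'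
    have h5 : (Real.cosh (β * (x + b)))⁻¹ * Real.cosh (β * (x + b)) ^ 2
        = Real.cosh (β * (x + b)) := by
      rw [sq, ← mul_assoc, inv_mul_cancel₀ hco, one_mul]
    rw [h5]
    linarith
  have hlim := Tendsto.div ((h1.const_mul (α ^ 2 * β)).add (h2.const_mul (α * β ^ 2)))
      ((tendsto_const_nhds.add (h3.const_mul (β ^ 2))).const_mul 2)
      (by positivity : (2:ℝ) * ((α:ℝ) ^ 2 + β ^ 2 * 0) ≠ 0)
  have hval : (α ^ 2 * β * 1 + α * β ^ 2 * 0) / (2 * (α ^ 2 + β ^ 2 * 0)) = β / 2 := by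
    field_simp
    ring
  rw [← hval]
  refine Tendsto.congr (fun x => ?_) hlim
  have hco : Real.cosh (β * (x + b)) ≠ 0 := (Real.cosh_pos _).ne'
  have hD := DD_pos (α := α) β a b hα.ne' x
  simp only [Pi.div_apply]
  unfold GG DD
  unfold DD at hD
  field_simp

include hα hβ in
lemma tendsto_GG_atBot : Tendsto (GG α β a b) atBot (nhds (-(β / 2))) := by
  have hu : Tendsto (fun x : ℝ => β * (x + b)) atBot atBot := by
    apply Tendsto.const_mul_atBot hβ
    exact tendsto_atBot_add_const_right _ b tendsto_id
  have h1 : Tendsto (fun x : ℝ => Real.sinh (β * (x + b)) / Real.cosh (β * (x + b)))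
      atBot (nhds (-1)) := tendsto_tanh_atBot.comp hu
  have hinv : Tendsto (fun x : ℝ => (Real.cosh (β * (x + b)))⁻¹) atBot (nhds 0) :=
    (tendsto_cosh_atBot.comp hu).inv_tendsto_atTop
  have h2 : Tendsto (fun x : ℝ =>
      Real.sin (α * (x + a)) * Real.cos (α * (x + a)) / Real.cosh (β * (x + b)) ^ 2)
      atBot (nhds 0) := by
    apply squeeze_zero_norm _ hinv
    intro x
    have hc1 : 1 ≤ Real.cosh (β * (x + b)) := Real.one_le_cosh _
    have h4 : |Real.sin (α * (x + a)) * Real.cos (α * (x + a))| ≤ 1 := by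
      rw [abs_mul]
      exact mul_le_one₀ (Real.abs_sin_le_one _) (abs_nonneg _) (Real.abs_cos_le_one _)
    rw [Real.norm_eq_abs, abs_div, abs_of_pos (by positivity :
      (0:ℝ) < Real.cosh (β * (x + b)) ^ 2), div_le_iff₀ (by positivity)]
    have hco := (Real.cosh_pos (β * (x + b))).ne'
    have h5 : (Real.cosh (β * (x + b)))⁻¹ * Real.cosh (β * (x + b)) ^ 2
        = Real.cosh (β * (x + b)) := by
      rw [sq, ← mul_assoc, inv_mul_cancel₀ hco, one_mul]
    rw [h5]
    linarith
  have h3 : Tendsto (fun x : ℝ =>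
      Real.sin (α * (x + a)) ^ 2 / Real.cosh (β * (x + b)) ^ 2) atBot (nhds 0) := by
    apply squeeze_zero_norm _ hinv
    intro x
    have hc1 : 1 ≤ Real.cosh (β * (x + b)) := Real.one_le_cosh _
    have h4 : |Real.sin (α * (x + a)) ^ 2| ≤ 1 := by
      rw [abs_pow]
      exact pow_le_one₀ (abs_nonneg _) (Real.abs_sin_le_one _)
    rw [Real.norm_eq_abs, abs_div, abs_of_pos (by positivity :
      (0:ℝ) < Real.cosh (β * (x + b)) ^ 2), div_le_iff₀ (by positivity)]
    have hco := (Real.cosh_pos (β * (x + b))).ne'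
    have h5 : (Real.cosh (β * (x + b)))⁻¹ * Real.cosh (β * (x + b)) ^ 2
        = Real.cosh (β * (x + b)) := by
      rw [sq, ← mul_assoc, inv_mul_cancel₀ hco, one_mul]
    rw [h5]
    linarith
  have hlim := Tendsto.div ((h1.const_mul (α ^ 2 * β)).add (h2.const_mul (α * β ^ 2)))
      ((tendsto_const_nhds.add (h3.const_mul (β ^ 2))).const_mul 2)
      (by positivity : (2:ℝ) * ((α:ℝ) ^ 2 + β ^ 2 * 0) ≠ 0)
  have hval : (α ^ 2 * β * (-1) + α * β ^ 2 * 0) / (2 * (α ^ 2 + β ^ 2 * 0)) = -(β / 2) := by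
    field_simp
    ring
  rw [← hval]
  refine Tendsto.congr (fun x => ?_) hlim
  have hco : Real.cosh (β * (x + b)) ≠ 0 := (Real.cosh_pos _).ne'
  have hD := DD_pos (α := α) β a b hα.ne' x
  simp only [Pi.div_apply]
  unfold GG DD
  unfold DD at hD
  field_simp

include hα hβ in
lemma gg_integral :
    Integrable (gg α β a b) ∧ ∫ x : ℝ, gg α β a b x = β := by
  have hG := fun x => hasDerivAt_GG a b hα (β := β) x
  have hpos : ∀ x : ℝ, 0 ≤ gg α β a b x := fun x => sq_nonneg _
  have htop := tendsto_GG_atTop a b hα hβ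
  have hbot := tendsto_GG_atBot a b hα hβ
  have hIoi : IntegrableOn (gg α β a b) (Set.Ioi 0) :=
    integrableOn_Ioi_deriv_of_nonneg' (fun x _ => hG x) (fun x _ => hpos x) htop
  have hIoiInt : ∫ x in Set.Ioi (0:ℝ), gg α β a b x = β / 2 - GG α β a b 0 :=
    integral_Ioi_of_hasDerivAt_of_nonneg' (fun x _ => hG x) (fun x _ => hpos x) htop
  have hGneg : ∀ x : ℝ, HasDerivAt (fun y : ℝ => -GG α β a b (-y)) (gg α β a b (-x)) x := by
    intro x
    have h := ((hG (-x)).comp x (hasDerivAt_neg x)).neg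
    exact h.congr_deriv (by ring)
  have hnegtop : Tendsto (fun y : ℝ => -GG α β a b (-y)) atTop (nhds (β / 2)) := by
    have := (hbot.comp tendsto_neg_atTop_atBot).neg
    simpa using this
  have hIoi' : IntegrableOn (fun x : ℝ => gg α β a b (-x)) (Set.Ioi 0) :=
    integrableOn_Ioi_deriv_of_nonneg' (fun x _ => hGneg x) (fun x _ => hpos _) hnegtop
  have hIio : IntegrableOn (gg α β a b) (Set.Iio 0) := by
    have key := (Measure.measurePreserving_neg (volume : Measure ℝ)).integrableOn_comp_preimage
      (Homeomorph.neg ℝ).measurableEmbedding (f := gg α β a b) (s := Set.Iio (0:ℝ))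
    have hpre : (Neg.neg : ℝ → ℝ) ⁻¹' Set.Iio 0 = Set.Ioi 0 := by
      ext y; simp
    apply key.1
    rw [hpre]
    exact hIoi'
  have hIic : IntegrableOn (gg α β a b) (Set.Iic 0) :=
    (integrableOn_Iic_iff_integrableOn_Iio (by simp)).2 hIio
  have hIicInt : ∫ x in Set.Iic (0:ℝ), gg α β a b x = GG α β a b 0 - -(β / 2) :=
    integral_Iic_of_hasDerivAt_of_tendsto (hG 0).continuousAt.continuousWithinAt
      (fun x _ => hG x) hIic hbot
  constructor
  · rw [← integrableOn_univ, ← Set.Iic_union_Ioi (a := (0:ℝ))]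
    exact hIic.union hIoi
  · rw [← intervalIntegral.integral_Iic_add_Ioi hIic hIoi, hIicInt, hIoiInt]
    ring

end basic

end BreatherMassAux

theorem breather_mass (α β : ℝ) (hα : 0 < α) (hβ : 0 < β) (t : ℝ) :
    (1 / 2 : ℝ) * ∫ x : ℝ, (breather α β 0 0 t x) ^ 2 = 4 * β := by
  set a := (α ^ 2 - 3 * β ^ 2) * t with ha
  set b := (3 * α ^ 2 - β ^ 2) * t with hb
  have hfun : (fun y : ℝ =>
      Real.arctan ((β / α) * Real.sin (α * (y + (α ^ 2 - 3 * β ^ 2) * t + 0)) /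
        Real.cosh (β * (y + (3 * α ^ 2 - β ^ 2) * t + 0))))
      = (fun y : ℝ =>
      Real.arctan ((β / α) * Real.sin (α * (y + a)) / Real.cosh (β * (y + b)))) := by
    funext y
    rw [add_zero, add_zero]
  have hbr : ∀ x : ℝ, (breather α β 0 0 t x) ^ 2 = 8 * BreatherMassAux.gg α β a b x := by
    intro x
    unfold breather
    rw [hfun, (BreatherMassAux.hasDerivAt_inner a b hα hβ x).deriv]
    unfold BreatherMassAux.gg
    rw [mul_pow, mul_pow, Real.sq_sqrt (by norm_num : (2:ℝ) ≥ 0)]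
    norm_num
  obtain ⟨hint, hval⟩ := BreatherMassAux.gg_integral a b hα hβ
  calc (1 / 2 : ℝ) * ∫ x : ℝ, (breather α β 0 0 t x) ^ 2
      = (1 / 2 : ℝ) * ∫ x : ℝ, 8 * BreatherMassAux.gg α β a b x := by
        congr 1
        exact integral_congr_ae (Filter.Eventually.of_forall hbr)
    _ = (1 / 2 : ℝ) * (8 * ∫ x : ℝ, BreatherMassAux.gg α β a b x) := by
        rw [integral_const_mul]
    _ = 4 * β := by rw [hval]; ring
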